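/- With notation as in the thickening construction, for all 1 ≤ l ≤ k the coefficients satisfy p_{kl} = Σ_{l ≤ j ≤ k} q_{kj} r_{jl}, where r_{jl} = −⟨s_{i_j} s_{i_{j-1}} ⋯ s_{i_{l+1}} α_{i_l}^∨, α_{∞_j}⟩. -/
import Mathlib


/-- The thickened generalized Cartan matrix `Ã` on `Ĩ = I ⊔ {∞_1, ∞_2, …}`. -/
def thickA {I : Type*} (a : I → I → ℤ) : (I ⊕ ℕ) → (I ⊕ ℕ) → ℤ
  | Sum.inl i, Sum.inl j => a i j
  | Sum.inl _, Sum.inr _ => -2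
  | Sum.inr _, Sum.inl _ => -2
  | Sum.inr l, Sum.inr l' => if l = l' then 2 else -2

/-- Weights in coordinates: `λ` is the function `r ↦ ⟨α_r^∨, λ⟩`; the simple reflection
`s_t` acts by `(s_t λ)(r) = λ(r) - λ(t) · Ã(r,t)`. -/
def wRefl {I : Type*} (a : I → I → ℤ) (t : I ⊕ ℕ) (lam : (I ⊕ ℕ) → ℤ) : (I ⊕ ℕ) → ℤ :=
  fun r => lam r - lam t * thickA a r t

/-- The fundamental weight `ω_t` in coordinates. -/
def fw {I : Type*} [DecidableEq I] (t : I ⊕ ℕ) : (I ⊕ ℕ) → ℤ :=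
  fun r => if r = t then 1 else 0

/-- `wChain a i l k` is `s_{i_{l+1}} s_{∞_{l+1}} ⋯ s_{i_k} s_{∞_k}` acting on weights. -/
def wChain {I : Type*} (a : I → I → ℤ) (i : ℕ → I) (l : ℕ) :
    ℕ → ((I ⊕ ℕ) → ℤ) → ((I ⊕ ℕ) → ℤ)
  | 0 => id
  | k + 1 =>
    if k + 1 ≤ l then id
    else fun lam => wChain a i l k (wRefl a (.inl (i (k + 1))) (wRefl a (.inr (k + 1)) lam))

/-- `p_{kl} = -⟨α_{i_l}^∨, s_{∞_l} s_{i_{l+1}} s_{∞_{l+1}} ⋯ s_{i_k} s_{∞_k} ω_{∞_k}⟩`. -/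
def pCoeff {I : Type*} [DecidableEq I] (a : I → I → ℤ) (i : ℕ → I) (k l : ℕ) : ℤ :=
  -(wRefl a (.inr l) (wChain a i l k (fw (.inr k))) (.inl (i l)))

/-- `q_{kl} = -⟨α_{∞_l}^∨, s_{i_{l+1}} s_{∞_{l+1}} ⋯ s_{i_k} s_{∞_k} ω_{∞_k}⟩`. -/
def qCoeff {I : Type*} [DecidableEq I] (a : I → I → ℤ) (i : ℕ → I) (k l : ℕ) : ℤ :=
  -(wChain a i l k (fw (.inr k)) (.inr l))

/-- The pairing `⟨c, α_t⟩` of a coroot `c` (coordinates in the simple coroot basis, finitely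
supported) with the simple root `α_t`. -/
def corootPair {I : Type*} (a : I → I → ℤ) (c : (I ⊕ ℕ) →₀ ℤ) (t : I ⊕ ℕ) : ℤ :=
  c.sum fun r m => m * thickA a r t

/-- The simple reflection `s_t` acting on coroots: `s_t c = c - ⟨c, α_t⟩ α_t^∨`. -/
noncomputable def cRefl {I : Type*} [DecidableEq I] (a : I → I → ℤ) (t : I ⊕ ℕ)
    (c : (I ⊕ ℕ) →₀ ℤ) : (I ⊕ ℕ) →₀ ℤ :=
  c - corootPair a c t • Finsupp.single t 1

/-- `cChain a i l j` is the coroot `s_{i_j} s_{i_{j-1}} ⋯ s_{i_{l+1}} α_{i_l}^∨`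
(equal to `α_{i_l}^∨` if `j ≤ l`). -/
noncomputable def cChain {I : Type*} [DecidableEq I] (a : I → I → ℤ) (i : ℕ → I) (l : ℕ) :
    ℕ → ((I ⊕ ℕ) →₀ ℤ)
  | 0 => Finsupp.single (.inl (i l)) 1
  | j + 1 =>
    if j + 1 ≤ l then Finsupp.single (.inl (i l)) 1
    else cRefl a (.inl (i (j + 1))) (cChain a i l j)

/-- `r_{jl} = -⟨s_{i_j} s_{i_{j-1}} ⋯ s_{i_{l+1}} α_{i_l}^∨, α_{∞_j}⟩`. -/
noncomputable def rCoeff {I : Type*} [DecidableEq I] (a : I → I → ℤ) (i : ℕ → I)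
    (j l : ℕ) : ℤ :=
  -corootPair a (cChain a i l j) (.inr j)

section Aux

variable {I : Type*} [DecidableEq I]

/-- Pairing of a coroot with a weight. -/
def pairP {I : Type*} (c : (I ⊕ ℕ) →₀ ℤ) (lam : (I ⊕ ℕ) → ℤ) : ℤ :=
  c.sum fun r m => m * lam r

lemma pairP_single (t : I ⊕ ℕ) (n : ℤ) (lam : (I ⊕ ℕ) → ℤ) :
    pairP (Finsupp.single t n) lam = n * lam t :=
  Finsupp.sum_single_index (zero_mul _)

lemma pairP_sub (c d : (I ⊕ ℕ) →₀ ℤ) (lam : (I ⊕ ℕ) → ℤ) :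
    pairP (c - d) lam = pairP c lam - pairP d lam :=
  Finsupp.sum_sub_index (fun r m n => sub_mul m n _)

lemma corootPair_single (a : I → I → ℤ) (t : I ⊕ ℕ) (n : ℤ) (t' : I ⊕ ℕ) :
    corootPair a (Finsupp.single t n) t' = n * thickA a t t' :=
  Finsupp.sum_single_index (zero_mul _)

lemma corootPair_add (a : I → I → ℤ) (c d : (I ⊕ ℕ) →₀ ℤ) (t : I ⊕ ℕ) :
    corootPair a (c + d) t = corootPair a c t + corootPair a d t :=
  Finsupp.sum_add_index' (fun r => zero_mul _) (fun r m n => add_mul m n _)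

lemma corootPair_smul (a : I → I → ℤ) (z : ℤ) (c : (I ⊕ ℕ) →₀ ℤ) (t : I ⊕ ℕ) :
    corootPair a (z • c) t = z * corootPair a c t := by
  rw [corootPair, corootPair, Finsupp.mul_sum]
  exact Eq.trans (Finsupp.sum_smul_index' fun r => zero_mul _)
    (Finsupp.sum_congr fun r _ => by simp [mul_assoc])

lemma pairP_wRefl (a : I → I → ℤ) (t : I ⊕ ℕ) (c : (I ⊕ ℕ) →₀ ℤ) (lam : (I ⊕ ℕ) → ℤ) :
    pairP c (wRefl a t lam) = pairP (cRefl a t c) lam := by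
  have hL : pairP c (wRefl a t lam)
      = c.sum (fun r m => m * lam r) - (c.sum fun r m => m * thickA a r t) * lam t := by
    rw [pairP]
    have : (c.sum fun r m => m * wRefl a t lam r)
        = c.sum fun r m => (m * lam r - (m * thickA a r t) * lam t) := by
      refine Finsupp.sum_congr fun r _ => ?_
      simp [wRefl]; ring
    rw [this, Finsupp.sum_sub, Finsupp.sum_mul]
  rw [hL, cRefl, pairP_sub, Finsupp.smul_single', mul_one, pairP_single]
  rfl

/-- The dual chain of coroot reflections `s_{∞_{k}} s_{i_{k}} ⋯ s_{∞_{l+1}} s_{i_{l+1}}`. -/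
noncomputable def dChain (a : I → I → ℤ) (i : ℕ → I) (l : ℕ) :
    ℕ → ((I ⊕ ℕ) →₀ ℤ) → ((I ⊕ ℕ) →₀ ℤ)
  | 0 => id
  | k + 1 =>
    if k + 1 ≤ l then id
    else fun c => cRefl a (.inr (k + 1)) (cRefl a (.inl (i (k + 1))) (dChain a i l k c))

lemma dChain_le (a : I → I → ℤ) (i : ℕ → I) {l k : ℕ} (h : k ≤ l) (c : (I ⊕ ℕ) →₀ ℤ) :
    dChain a i l k c = c := by
  cases k with
  | zero => rfl
  | succ k => simp [dChain, h]

lemma dChain_succ (a : I → I → ℤ) (i : ℕ → I) {l k : ℕ} (h : ¬ k + 1 ≤ l)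
    (c : (I ⊕ ℕ) →₀ ℤ) :
    dChain a i l (k + 1) c
      = cRefl a (.inr (k + 1)) (cRefl a (.inl (i (k + 1))) (dChain a i l k c)) := by
  simp [dChain, h]

lemma cChain_le (a : I → I → ℤ) (i : ℕ → I) {l j : ℕ} (h : j ≤ l) :
    cChain a i l j = Finsupp.single (.inl (i l)) 1 := by
  cases j with
  | zero => rfl
  | succ j => simp [cChain, h]

lemma cChain_succ (a : I → I → ℤ) (i : ℕ → I) {l j : ℕ} (h : ¬ j + 1 ≤ l) :
    cChain a i l (j + 1) = cRefl a (.inl (i (j + 1))) (cChain a i l j) := by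
  simp [cChain, h]

lemma pairP_wChain (a : I → I → ℤ) (i : ℕ → I) (l : ℕ) :
    ∀ (k : ℕ) (c : (I ⊕ ℕ) →₀ ℤ) (lam : (I ⊕ ℕ) → ℤ),
      pairP c (wChain a i l k lam) = pairP (dChain a i l k c) lam := by
  intro k
  induction k with
  | zero => intro c lam; rfl
  | succ k ih =>
    intro c lam
    by_cases h : k + 1 ≤ l
    · simp [wChain, dChain, h]
    · simp only [wChain, dChain, h, if_neg, if_false]
      rw [ih, pairP_wRefl, pairP_wRefl]

lemma pairP_fw (c : (I ⊕ ℕ) →₀ ℤ) (t : I ⊕ ℕ) : pairP c (fw t) = c t := by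
  rw [pairP, Finsupp.sum, Finset.sum_eq_single t]
  · simp [fw]
  · intro b _ hb; simp [fw, hb]
  · intro h; simp [Finsupp.notMem_support_iff.mp h, fw]

lemma cRefl_zero (a : I → I → ℤ) (t : I ⊕ ℕ) : cRefl a t (0 : (I ⊕ ℕ) →₀ ℤ) = 0 := by
  simp [cRefl, corootPair, Finsupp.sum_zero_index]

lemma cRefl_add (a : I → I → ℤ) (t : I ⊕ ℕ) (c d : (I ⊕ ℕ) →₀ ℤ) :
    cRefl a t (c + d) = cRefl a t c + cRefl a t d := by
  simp only [cRefl, corootPair_add, add_smul]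
  abel

lemma cRefl_smul (a : I → I → ℤ) (t : I ⊕ ℕ) (z : ℤ) (c : (I ⊕ ℕ) →₀ ℤ) :
    cRefl a t (z • c) = z • cRefl a t c := by
  simp only [cRefl, corootPair_smul, smul_sub, mul_smul]

lemma cRefl_sum (a : I → I → ℤ) (t : I ⊕ ℕ) (s : Finset ℕ) (f : ℕ → ((I ⊕ ℕ) →₀ ℤ)) :
    cRefl a t (∑ j ∈ s, f j) = ∑ j ∈ s, cRefl a t (f j) := by
  induction s using Finset.cons_induction with
  | empty => simp [cRefl_zero]
  | cons x s hx ih => simp [Finset.sum_insert hx, cRefl_add, ih]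

lemma cChain_inr (a : I → I → ℤ) (i : ℕ → I) (l : ℕ) :
    ∀ (j : ℕ) (m : ℕ), cChain a i l j (.inr m) = 0 := by
  intro j
  induction j with
  | zero => intro m; simp [cChain, Finsupp.single_apply]
  | succ j ih =>
    intro m
    by_cases h : j + 1 ≤ l
    · simp [cChain_le a i h, Finsupp.single_apply]
    · rw [cChain_succ a i h]
      simp [cRefl, Finsupp.single_apply, ih]

/-- Key structural identity: the dual chain applied to `s_{∞_l} α_{i_l}^∨` decomposes as
`cChain` plus the `r`-weighted images of the `α_{∞_j}^∨`. -/
lemma key (a : I → I → ℤ) (i : ℕ → I) (l : ℕ) :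
    ∀ (k : ℕ), l ≤ k →
      dChain a i l k (cRefl a (.inr l) (Finsupp.single (.inl (i l)) 1))
        = cChain a i l k + ∑ j ∈ Finset.Icc l k,
            rCoeff a i j l • dChain a i j k (Finsupp.single (.inr j) 1) := by
  intro k hlk
  induction k, hlk using Nat.le_induction with
  | base =>
    rw [dChain_le a i le_rfl, cChain_le a i le_rfl, Finset.Icc_self, Finset.sum_singleton,
      dChain_le a i le_rfl, cRefl, rCoeff, cChain_le a i le_rfl,
      corootPair_single]
    rw [sub_eq_add_neg, ← neg_smul]
  | succ k hk ih =>
    have h1 : ¬ k + 1 ≤ l := by omega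
    rw [dChain_succ a i h1, ih, cRefl_add, cRefl_add, cRefl_sum, cRefl_sum,
      ← cChain_succ a i h1]
    have hsum : ∀ j ∈ Finset.Icc l k,
        cRefl a (.inr (k + 1)) (cRefl a (.inl (i (k + 1)))
          (rCoeff a i j l • dChain a i j k (Finsupp.single (.inr j) 1)))
        = rCoeff a i j l • dChain a i j (k + 1) (Finsupp.single (.inr j) 1) := by
      intro j hj
      have hj' : ¬ k + 1 ≤ j := by
        have := (Finset.mem_Icc.mp hj).2; omega
      rw [cRefl_smul, cRefl_smul, dChain_succ a i hj']
    rw [Finset.sum_congr rfl hsum]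
    have htop : cRefl a (.inr (k + 1)) (cChain a i l (k + 1))
        = cChain a i l (k + 1) + rCoeff a i (k + 1) l •
            dChain a i (k + 1) (k + 1) (Finsupp.single (.inr (k + 1)) 1) := by
      rw [dChain_le a i le_rfl, cRefl, rCoeff, sub_eq_add_neg, neg_smul]
    rw [htop, Finset.sum_Icc_succ_top (by omega : l ≤ k + 1)]
    abel

lemma qCoeff_eq (a : I → I → ℤ) (i : ℕ → I) (k j : ℕ) :
    qCoeff a i k j = -((dChain a i j k (Finsupp.single (.inr j) 1)) (.inr k)) := by
  rw [qCoeff]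
  congr 1
  have : wChain a i j k (fw (.inr k)) (.inr j)
      = pairP (Finsupp.single ((.inr j : I ⊕ ℕ)) 1) (wChain a i j k (fw (.inr k))) := by
    rw [pairP_single, one_mul]
  rw [this, pairP_wChain, pairP_fw]

end Aux

/-- **The thickening coefficient identity** `p_{kl} = Σ_{l ≤ j ≤ k} q_{kj} r_{jl}`
for all `1 ≤ l ≤ k`. -/
theorem thickening_p_eq_sum_q_r {I : Type*} [DecidableEq I] (a : I → I → ℤ)
    (i : ℕ → I) (k l : ℕ) (hl : 1 ≤ l) (hlk : l ≤ k) :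
    pCoeff a i k l = ∑ j ∈ Finset.Icc l k, qCoeff a i k j * rCoeff a i j l := by
  have hp : pCoeff a i k l
      = -((dChain a i l k (cRefl a (.inr l) (Finsupp.single (.inl (i l)) 1))) (.inr k)) := by
    rw [pCoeff]
    congr 1
    have e1 : wRefl a (.inr l) (wChain a i l k (fw (.inr k))) (.inl (i l))
        = pairP (Finsupp.single ((.inl (i l) : I ⊕ ℕ)) 1)
            (wRefl a (.inr l) (wChain a i l k (fw (.inr k)))) := by
      rw [pairP_single, one_mul]
    rw [e1, pairP_wRefl, pairP_wChain, pairP_fw]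
  rw [hp, key a i l k hlk]
  rw [Finsupp.add_apply, Finset.sum_apply']
  simp only [Finsupp.smul_apply, cChain_inr, zero_add, smul_eq_mul]
  rw [neg_eq_iff_eq_neg, ← Finset.sum_neg_distrib]
  refine Finset.sum_congr rfl fun j hj => ?_
  rw [qCoeff_eq]
  ring
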